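/- Let Õ and Ô be (p·d)×k real block matrices, each consisting of p blocks of size d×k, and write M_{i:j} for the submatrix of a block matrix M consisting of its i-th through j-th blocks. Let s be an integer with 1 ≤ s ≤ p−1, and suppose Õ_{s+1:p} = Õ_{1:p−s}·N₁ˢ for an invertible k×k matrix N₁. Suppose Ô_{1:p−s} has full column rank k, let Ŝ be an invertible k×k matrix, and set E := Õ − Ô Ŝ. Define N̂ := (Ô_{1:p−s}ᴴ Ô_{1:p−s})⁻¹ Ô_{1:p−s}ᴴ Ô_{s+1:p}. Then ‖I − Ŝ⁻¹ N̂ Ŝ N₁⁻ˢ‖ ≤ ‖Ŝ⁻¹‖·(1 + ‖N₁⁻ˢ‖)·‖E‖ / σ_min(Ô_{1:p−s}). -/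

import Mathlib

open scoped Matrix.Norms.L2Operator
open Matrix

/-- The smallest singular value of a matrix: the infimum of `‖M x‖` over unit vectors `x`
of Euclidean space. -/
noncomputable def sigmaMin {m n : Type*} [Fintype m] [Fintype n] [DecidableEq n]
    (M : Matrix m n ℝ) : ℝ :=
  sInf {r : ℝ | ∃ x : EuclideanSpace ℝ n, ‖x‖ = 1 ∧ r = ‖Matrix.toEuclideanLin M x‖}

/-- For a `(p·d) × k` block matrix `M` with `p` blocks of size `d × k`, the submatrix
consisting of blocks `i, i+1, …, i+len-1` (zero-indexed; this is `M_{i+1:i+len}` in the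
one-indexed notation of the paper). -/
def blockSlice {p d k : ℕ} (M : Matrix (Fin p × Fin d) (Fin k) ℝ) (i len : ℕ)
    (h : i + len ≤ p) : Matrix (Fin len × Fin d) (Fin k) ℝ :=
  fun rd c => M (⟨i + (rd.1 : ℕ), by have := rd.1.isLt; omega⟩, rd.2) c

section SigmaMinAux

variable {m n : Type*} [Fintype m] [Fintype n] [DecidableEq n]

lemma sigmaMin_bddBelow (M : Matrix m n ℝ) :
    BddBelow {r : ℝ | ∃ x : EuclideanSpace ℝ n, ‖x‖ = 1 ∧ r = ‖Matrix.toEuclideanLin M x‖} :=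
  ⟨0, fun r hr => by obtain ⟨x, -, rfl⟩ := hr; exact norm_nonneg _⟩

lemma sigmaMin_smul_le (M : Matrix m n ℝ) (x : EuclideanSpace ℝ n) :
    sigmaMin M * ‖x‖ ≤ ‖Matrix.toEuclideanLin M x‖ := by
  rcases eq_or_ne x 0 with rfl | hx
  · simp
  · have hxn : (0:ℝ) < ‖x‖ := norm_pos_iff.2 hx
    have h1 : sigmaMin M ≤ ‖Matrix.toEuclideanLin M x‖ / ‖x‖ := by
      apply csInf_le (sigmaMin_bddBelow M)
      refine ⟨‖x‖⁻¹ • x, ?_, ?_⟩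
      · rw [norm_smul, norm_inv, norm_norm, inv_mul_cancel₀ hxn.ne']
      · rw [_root_.map_smul, norm_smul, norm_inv, norm_norm, div_eq_inv_mul]
    calc sigmaMin M * ‖x‖ ≤ (‖Matrix.toEuclideanLin M x‖ / ‖x‖) * ‖x‖ :=
          mul_le_mul_of_nonneg_right h1 hxn.le
      _ = ‖Matrix.toEuclideanLin M x‖ := by field_simp

lemma sigmaMin_pos [Nonempty n] (M : Matrix m n ℝ)
    (hinj : Function.Injective (Matrix.toEuclideanLin M)) : 0 < sigmaMin M := by
  have hset : {r : ℝ | ∃ x : EuclideanSpace ℝ n, ‖x‖ = 1 ∧ r = ‖Matrix.toEuclideanLin M x‖} =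
      (fun x : EuclideanSpace ℝ n => ‖Matrix.toEuclideanLin M x‖) '' Metric.sphere 0 1 := by
    ext r
    simp [Set.mem_image, mem_sphere_zero_iff_norm, eq_comm, and_comm]
  have hcont : Continuous fun x : EuclideanSpace ℝ n => ‖Matrix.toEuclideanLin M x‖ :=
    ((Matrix.toEuclideanLin M).continuous_of_finiteDimensional).norm
  have hcompact : IsCompact ((fun x : EuclideanSpace ℝ n => ‖Matrix.toEuclideanLin M x‖) ''
      Metric.sphere 0 1) := (isCompact_sphere 0 1).image hcont
  have hne : ((fun x : EuclideanSpace ℝ n => ‖Matrix.toEuclideanLin M x‖) ''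
      Metric.sphere 0 1).Nonempty := by
    refine ⟨_, ⟨EuclideanSpace.single (Classical.arbitrary n) (1:ℝ), ?_, rfl⟩⟩
    simp [mem_sphere_zero_iff_norm, EuclideanSpace.norm_single]
  have hmem := hcompact.sInf_mem hne
  rw [sigmaMin, hset]
  obtain ⟨x₀, hx₀, hval⟩ := hmem
  rw [mem_sphere_zero_iff_norm] at hx₀
  rw [← hval]
  have hx0 : x₀ ≠ 0 := by intro h; rw [h] at hx₀; simp at hx₀
  have : Matrix.toEuclideanLin M x₀ ≠ 0 := by
    intro h
    exact hx0 (hinj (by rw [h, map_zero]))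
  exact norm_pos_iff.2 this

end SigmaMinAux

lemma toEuclideanLin_mul' {m n l : Type*} [Fintype m] [Fintype n] [Fintype l]
    [DecidableEq n] [DecidableEq l] (A : Matrix m n ℝ) (B : Matrix n l ℝ)
    (x : EuclideanSpace ℝ l) :
    Matrix.toEuclideanLin (A * B) x = Matrix.toEuclideanLin A (Matrix.toEuclideanLin B x) := by
  simp only [Matrix.toEuclideanLin_apply, Equiv.apply_symm_apply, Matrix.mulVec_mulVec]

lemma mulVecLin_inj_of_rank {m : Type*} [Fintype m] {k : ℕ} (B : Matrix m (Fin k) ℝ)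
    (h : B.rank = k) : Function.Injective B.mulVecLin := by
  rw [← LinearMap.ker_eq_bot]
  have h2 := B.mulVecLin.finrank_range_add_finrank_ker
  rw [Module.finrank_fin_fun] at h2
  rw [Matrix.rank] at h
  have h3 : Module.finrank ℝ (LinearMap.ker B.mulVecLin) = 0 := by omega
  exact Submodule.finrank_eq_zero.mp h3

lemma toEuclideanLin_inj_of_rank {m : Type*} [Fintype m] {k : ℕ} (B : Matrix m (Fin k) ℝ)
    (h : B.rank = k) : Function.Injective (Matrix.toEuclideanLin B) := by
  have hmv := mulVecLin_inj_of_rank B h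
  intro x y hxy
  simp only [Matrix.toEuclideanLin_apply] at hxy
  have := (WithLp.equiv 2 (m → ℝ)).symm.injective hxy
  have h2 : B.mulVecLin ((WithLp.equiv 2 (Fin k → ℝ)) x) =
      B.mulVecLin ((WithLp.equiv 2 (Fin k → ℝ)) y) := this
  exact (WithLp.equiv 2 (Fin k → ℝ)).injective (hmv h2)

lemma gram_isUnit {m : Type*} [Fintype m] {k : ℕ} (B : Matrix m (Fin k) ℝ)
    (h : B.rank = k) : IsUnit (Bᴴ * B).det := by
  have hmv := mulVecLin_inj_of_rank B h
  have hPD : (Bᴴ * B).PosDef := by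
    refine Matrix.posDef_iff_dotProduct_mulVec.mpr ⟨Matrix.isHermitian_conjTranspose_mul_self _, fun x hx => ?_⟩
    rw [← Matrix.mulVec_mulVec, Matrix.dotProduct_mulVec, Matrix.vecMul_conjTranspose, star_star]
    have hBx : B *ᵥ x ≠ 0 := by
      intro hz
      apply hx
      have : B.mulVecLin x = B.mulVecLin 0 := by simpa [Matrix.mulVecLin_apply] using hz
      exact hmv this
    have h1 : (0:ℝ) ≤ star (B *ᵥ x) ⬝ᵥ (B *ᵥ x) := by
      simp only [star_trivial, dotProduct]
      exact Finset.sum_nonneg fun i _ => mul_self_nonneg _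
    rcases h1.lt_or_eq with h2 | h2
    · exact h2
    · exfalso
      apply hBx
      have : (B *ᵥ x) ⬝ᵥ (B *ᵥ x) = 0 := by simpa [star_trivial] using h2.symm
      exact dotProduct_self_eq_zero.mp this
  exact isUnit_iff_ne_zero.mpr hPD.det_pos.ne'

lemma pinv_mul_norm_le {m n l : Type*} [Fintype m] [Fintype n] [Fintype l]
    [DecidableEq m] [DecidableEq n] [DecidableEq l] [Nonempty n]
    (B : Matrix m n ℝ) (hinj : Function.Injective (Matrix.toEuclideanLin B))
    (hg : IsUnit (Bᴴ * B).det) (F : Matrix m l ℝ) :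
    ‖(Bᴴ * B)⁻¹ * Bᴴ * F‖ ≤ ‖F‖ / sigmaMin B := by
  have hσ : 0 < sigmaMin B := sigmaMin_pos B hinj
  have hP : ‖(Bᴴ * B)⁻¹ * Bᴴ‖ ≤ (sigmaMin B)⁻¹ := by
    rw [Matrix.l2_opNorm_def]
    refine ContinuousLinearMap.opNorm_le_bound _ (inv_nonneg.mpr hσ.le) fun y => ?_
    simp only [LinearEquiv.trans_apply, LinearMap.coe_toContinuousLinearMap']
    set x := Matrix.toEuclideanLin ((Bᴴ * B)⁻¹ * Bᴴ) y with hxdef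
    have hgram : Matrix.toEuclideanLin (Bᴴ * B) x = Matrix.toEuclideanLin Bᴴ y := by
      rw [hxdef, ← toEuclideanLin_mul']
      have hmm : (Bᴴ * B) * ((Bᴴ * B)⁻¹ * Bᴴ) = Bᴴ := by
        rw [← Matrix.mul_assoc, Matrix.mul_nonsing_inv _ hg, Matrix.one_mul]
      rw [hmm]
    set z := Matrix.toEuclideanLin B x with hzdef
    have hzz : (inner ℝ z z : ℝ) = (inner ℝ z y : ℝ) := by
      have h1 : (inner ℝ z z : ℝ) = (inner ℝ x (Matrix.toEuclideanLin Bᴴ z) : ℝ) := by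
        rw [Matrix.toEuclideanLin_conjTranspose_eq_adjoint, LinearMap.adjoint_inner_right]
      have h2 : Matrix.toEuclideanLin Bᴴ z = Matrix.toEuclideanLin (Bᴴ * B) x := by
        rw [toEuclideanLin_mul']
      have h3 : (inner ℝ x (Matrix.toEuclideanLin Bᴴ y) : ℝ) = (inner ℝ z y : ℝ) := by
        rw [Matrix.toEuclideanLin_conjTranspose_eq_adjoint, LinearMap.adjoint_inner_right]
      rw [h1, h2, hgram, h3]
    have hz2 : ‖z‖ * ‖z‖ ≤ ‖z‖ * ‖y‖ := by
      calc ‖z‖ * ‖z‖ = (inner ℝ z z : ℝ) := (real_inner_self_eq_norm_mul_norm z).symm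
        _ = (inner ℝ z y : ℝ) := hzz
        _ ≤ ‖z‖ * ‖y‖ := real_inner_le_norm z y
    have hx1 : sigmaMin B * ‖x‖ ≤ ‖z‖ := sigmaMin_smul_le B x
    have hxy : sigmaMin B * ‖x‖ ≤ ‖y‖ := by
      nlinarith [norm_nonneg y, norm_nonneg z, norm_nonneg x]
    rw [inv_mul_eq_div, le_div_iff₀ hσ]
    linarith [hxy]
  calc ‖(Bᴴ * B)⁻¹ * Bᴴ * F‖ ≤ ‖(Bᴴ * B)⁻¹ * Bᴴ‖ * ‖F‖ := Matrix.l2_opNorm_mul _ _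
    _ ≤ (sigmaMin B)⁻¹ * ‖F‖ := mul_le_mul_of_nonneg_right hP (norm_nonneg _)
    _ = ‖F‖ / sigmaMin B := (div_eq_inv_mul _ _).symm

lemma blockSlice_add {p d k : ℕ} (X Y : Matrix (Fin p × Fin d) (Fin k) ℝ) (i len : ℕ)
    (h : i + len ≤ p) :
    blockSlice (X + Y) i len h = blockSlice X i len h + blockSlice Y i len h := rfl

lemma blockSlice_mul {p d k : ℕ} (X : Matrix (Fin p × Fin d) (Fin k) ℝ)
    (N : Matrix (Fin k) (Fin k) ℝ) (i len : ℕ) (h : i + len ≤ p) :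
    blockSlice (X * N) i len h = blockSlice X i len h * N := by
  ext rd c
  simp [blockSlice, Matrix.mul_apply]

def embFn {p d : ℕ} (i len : ℕ) (h : i + len ≤ p) (rd : Fin len × Fin d) : Fin p × Fin d :=
  (⟨i + (rd.1 : ℕ), by have := rd.1.isLt; omega⟩, rd.2)

lemma embFn_injective {p d : ℕ} (i len : ℕ) (h : i + len ≤ p) :
    Function.Injective (embFn (d := d) i len h) := by
  intro a b hab
  simp only [embFn, Prod.mk.injEq, Fin.mk.injEq] at hab
  exact Prod.ext (Fin.ext (by omega)) hab.2

lemma norm_blockSlice_le {p d k : ℕ} (M : Matrix (Fin p × Fin d) (Fin k) ℝ) (i len : ℕ)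
    (h : i + len ≤ p) : ‖blockSlice M i len h‖ ≤ ‖M‖ := by
  rw [Matrix.l2_opNorm_def]
  refine ContinuousLinearMap.opNorm_le_bound _ (norm_nonneg M) fun x => ?_
  simp only [LinearEquiv.trans_apply, LinearMap.coe_toContinuousLinearMap']
  have h1 : ‖Matrix.toEuclideanLin (blockSlice M i len h) x‖ ≤
      ‖Matrix.toEuclideanLin M x‖ := by
    rw [EuclideanSpace.norm_eq, EuclideanSpace.norm_eq]
    apply Real.sqrt_le_sqrt
    set v := (WithLp.equiv 2 (Fin k → ℝ)) x with hv
    have happ : ∀ j : Fin p × Fin d, (Matrix.toEuclideanLin M x) j = (M *ᵥ v) j := by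
      intro j
      simp [Matrix.toEuclideanLin_apply, hv, WithLp.equiv_apply]
    have happ2 : ∀ rd : Fin len × Fin d,
        (Matrix.toEuclideanLin (blockSlice M i len h) x) rd =
          ((blockSlice M i len h) *ᵥ v) rd := by
      intro rd
      simp [Matrix.toEuclideanLin_apply, hv, WithLp.equiv_apply]
    simp only [happ, happ2]
    have hval : ∀ rd : Fin len × Fin d, ((blockSlice M i len h) *ᵥ v) rd =
        (M *ᵥ v) (embFn i len h rd) := fun rd => rfl
    simp only [hval]
    calc ∑ rd : Fin len × Fin d, ‖(M *ᵥ v) (embFn i len h rd)‖ ^ 2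
        = ∑ j ∈ Finset.univ.image (embFn i len h), ‖(M *ᵥ v) j‖ ^ 2 :=
          (Finset.sum_image (f := fun j : Fin p × Fin d => ‖(M *ᵥ v) j‖ ^ 2)
            (fun a _ b _ hab => embFn_injective i len h hab)).symm
      _ ≤ ∑ j : Fin p × Fin d, ‖(M *ᵥ v) j‖ ^ 2 :=
          Finset.sum_le_sum_of_subset_of_nonneg (Finset.subset_univ _)
            (fun j _ _ => by positivity)
  calc ‖Matrix.toEuclideanLin (blockSlice M i len h) x‖ ≤ ‖Matrix.toEuclideanLin M x‖ := h1
    _ ≤ ‖M‖ * ‖x‖ := by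
        have := Matrix.l2_opNorm_mulVec M x
        simpa [Matrix.toEuclideanLin_apply] using this

lemma main_aux {q : Type*} [Fintype q] [DecidableEq q] {k : ℕ} [NeZero k]
    (B A E1 E2 : Matrix q (Fin k) ℝ) (N S Nhat : Matrix (Fin k) (Fin k) ℝ)
    (hN : IsUnit N.det) (hS : IsUnit S.det)
    (hinj : Function.Injective (Matrix.toEuclideanLin B))
    (hg : IsUnit (Bᴴ * B).det)
    (hA : A * S = E1 * N + B * S * N - E2)
    (hNhat : Nhat = (Bᴴ * B)⁻¹ * Bᴴ * A)
    (e : ℝ) (he1 : ‖E1‖ ≤ e) (he2 : ‖E2‖ ≤ e) :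
    ‖(1 : Matrix (Fin k) (Fin k) ℝ) - S⁻¹ * Nhat * S * N⁻¹‖ ≤
      ‖S⁻¹‖ * (1 + ‖N⁻¹‖) * e / sigmaMin B := by
  have hσ : 0 < sigmaMin B := sigmaMin_pos B hinj
  set G := Bᴴ * B with hG
  set P := G⁻¹ * Bᴴ with hPdef
  have hPB : P * B = 1 := by
    rw [hPdef, Matrix.mul_assoc, ← hG, Matrix.nonsing_inv_mul _ hg]
  have hNS : Nhat * S = P * (E1 * N) + S * N - P * E2 := by
    rw [hNhat, Matrix.mul_assoc P A S, hA, Matrix.mul_sub, Matrix.mul_add]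
    congr 2
    rw [← Matrix.mul_assoc P (B * S) N, ← Matrix.mul_assoc P B S, hPB, Matrix.one_mul]
  have hkey : (1 : Matrix (Fin k) (Fin k) ℝ) - S⁻¹ * Nhat * S * N⁻¹ =
      S⁻¹ * ((P * E2) * N⁻¹) - S⁻¹ * (P * E1) := by
    have hT : S⁻¹ * Nhat * S * N⁻¹ =
        S⁻¹ * (P * E1) + 1 - S⁻¹ * ((P * E2) * N⁻¹) := by
      rw [Matrix.mul_assoc S⁻¹ Nhat S, hNS]
      rw [Matrix.mul_sub, Matrix.mul_add, Matrix.sub_mul, Matrix.add_mul]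
      have t1 : S⁻¹ * (P * (E1 * N)) * N⁻¹ = S⁻¹ * (P * E1) := by
        rw [← Matrix.mul_assoc P E1 N, ← Matrix.mul_assoc S⁻¹ (P * E1) N,
          Matrix.mul_assoc (S⁻¹ * (P * E1)) N N⁻¹, Matrix.mul_nonsing_inv _ hN,
          Matrix.mul_one]
      have t2 : S⁻¹ * (S * N) * N⁻¹ = 1 := by
        rw [← Matrix.mul_assoc S⁻¹ S N, Matrix.nonsing_inv_mul _ hS, Matrix.one_mul,
          Matrix.mul_nonsing_inv _ hN]
      have t3 : S⁻¹ * (P * E2) * N⁻¹ = S⁻¹ * ((P * E2) * N⁻¹) := by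
        rw [Matrix.mul_assoc]
      rw [t1, t2, t3]
    rw [hT]
    abel
  rw [hkey]
  have b1 : ‖P * E1‖ ≤ e / sigmaMin B :=
    le_trans (pinv_mul_norm_le B hinj hg E1) ((div_le_div_iff_of_pos_right hσ).mpr he1)
  have b2 : ‖P * E2‖ ≤ e / sigmaMin B :=
    le_trans (pinv_mul_norm_le B hinj hg E2) ((div_le_div_iff_of_pos_right hσ).mpr he2)
  have hX2 : ‖S⁻¹ * ((P * E2) * N⁻¹)‖ ≤ ‖S⁻¹‖ * (‖P * E2‖ * ‖N⁻¹‖) :=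
    le_trans (Matrix.l2_opNorm_mul _ _)
      (mul_le_mul_of_nonneg_left (Matrix.l2_opNorm_mul _ _) (norm_nonneg _))
  have hX1 : ‖S⁻¹ * (P * E1)‖ ≤ ‖S⁻¹‖ * ‖P * E1‖ := Matrix.l2_opNorm_mul _ _
  calc ‖S⁻¹ * ((P * E2) * N⁻¹) - S⁻¹ * (P * E1)‖
      ≤ ‖S⁻¹ * ((P * E2) * N⁻¹)‖ + ‖S⁻¹ * (P * E1)‖ := norm_sub_le _ _
    _ ≤ ‖S⁻¹‖ * (‖P * E2‖ * ‖N⁻¹‖) + ‖S⁻¹‖ * ‖P * E1‖ := add_le_add hX2 hX1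
    _ ≤ ‖S⁻¹‖ * ((e / sigmaMin B) * ‖N⁻¹‖) + ‖S⁻¹‖ * (e / sigmaMin B) := by gcongr
    _ = ‖S⁻¹‖ * (1 + ‖N⁻¹‖) * e / sigmaMin B := by field_simp; ring

/-- core perturbation estimate of Corollary B.6. Suppose `1 ≤ s ≤ p − 1`,
`Õ_{s+1:p} = Õ_{1:p−s} N₁ˢ` with `N₁` invertible, `Ô_{1:p−s}` has full column rank `k`,
`Ŝ` is invertible, `E := Õ − Ô Ŝ`, and
`N̂ := (Ô_{1:p−s}ᴴ Ô_{1:p−s})⁻¹ Ô_{1:p−s}ᴴ Ô_{s+1:p}`. Then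
`‖I − Ŝ⁻¹ N̂ Ŝ N₁⁻ˢ‖ ≤ ‖Ŝ⁻¹‖ (1 + ‖N₁⁻ˢ‖) ‖E‖ / σ_min(Ô_{1:p−s})`. -/
theorem N1_power_similarity_error {p d k s : ℕ} (hd : 0 < d) (hk : 0 < k)
    (hs1 : 1 ≤ s) (hs2 : s ≤ p - 1) (hp : 2 ≤ p)
    (Otil Ohat : Matrix (Fin p × Fin d) (Fin k) ℝ)
    (N₁ S : Matrix (Fin k) (Fin k) ℝ) (hN₁ : IsUnit N₁.det)
    (hshift : blockSlice Otil s (p - s) (by omega) =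
      blockSlice Otil 0 (p - s) (by omega) * N₁ ^ s)
    (hrank : (blockSlice Ohat 0 (p - s) (by omega)).rank = k)
    (hS : IsUnit S.det)
    (E : Matrix (Fin p × Fin d) (Fin k) ℝ) (hE : E = Otil - Ohat * S)
    (Nhat : Matrix (Fin k) (Fin k) ℝ)
    (hNhat : Nhat =
      ((blockSlice Ohat 0 (p - s) (by omega))ᴴ * blockSlice Ohat 0 (p - s) (by omega))⁻¹ *
        (blockSlice Ohat 0 (p - s) (by omega))ᴴ * blockSlice Ohat s (p - s) (by omega)) :
    ‖(1 : Matrix (Fin k) (Fin k) ℝ) - S⁻¹ * Nhat * S * (N₁ ^ s)⁻¹‖ ≤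
      ‖S⁻¹‖ * (1 + ‖(N₁ ^ s)⁻¹‖) * ‖E‖ / sigmaMin (blockSlice Ohat 0 (p - s) (by omega)) := by
  haveI : NeZero k := ⟨hk.ne'⟩
  have hle0 : 0 + (p - s) ≤ p := by omega
  have hles : s + (p - s) ≤ p := by omega
  have hN : IsUnit (N₁ ^ s).det := by rw [Matrix.det_pow]; exact hN₁.pow s
  have hrank' : (blockSlice Ohat 0 (p - s) hle0).rank = k := hrank
  have hinj : Function.Injective (Matrix.toEuclideanLin (blockSlice Ohat 0 (p - s) hle0)) :=
    toEuclideanLin_inj_of_rank _ hrank'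
  have hg : IsUnit ((blockSlice Ohat 0 (p - s) hle0)ᴴ * blockSlice Ohat 0 (p - s) hle0).det :=
    gram_isUnit _ hrank'
  have hOtil : Otil = E + Ohat * S := by rw [hE, sub_add_cancel]
  have h0 : blockSlice Otil 0 (p - s) hle0 =
      blockSlice E 0 (p - s) hle0 + blockSlice Ohat 0 (p - s) hle0 * S := by
    rw [hOtil, blockSlice_add, blockSlice_mul]
  have hs' : blockSlice Otil s (p - s) hles =
      blockSlice E s (p - s) hles + blockSlice Ohat s (p - s) hles * S := by
    rw [hOtil, blockSlice_add, blockSlice_mul]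
  have h2 : blockSlice Otil s (p - s) hles =
      blockSlice Otil 0 (p - s) hle0 * N₁ ^ s := hshift
  rw [hs', h0, Matrix.add_mul] at h2
  have hA : blockSlice Ohat s (p - s) hles * S =
      blockSlice E 0 (p - s) hle0 * N₁ ^ s +
        blockSlice Ohat 0 (p - s) hle0 * S * N₁ ^ s - blockSlice E s (p - s) hles := by
    rw [← h2]
    abel
  have hNhat' : Nhat =
      ((blockSlice Ohat 0 (p - s) hle0)ᴴ * blockSlice Ohat 0 (p - s) hle0)⁻¹ *
        (blockSlice Ohat 0 (p - s) hle0)ᴴ * blockSlice Ohat s (p - s) hles := hNhat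
  exact main_aux (blockSlice Ohat 0 (p - s) hle0) (blockSlice Ohat s (p - s) hles)
    (blockSlice E 0 (p - s) hle0) (blockSlice E s (p - s) hles) (N₁ ^ s) S Nhat
    hN hS hinj hg hA hNhat' ‖E‖ (norm_blockSlice_le E 0 (p - s) hle0)
    (norm_blockSlice_le E s (p - s) hles)
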